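/- Let Ω ⊂ ℝ^N be a bounded domain and let V ∈ L^q(Ω) with V ≥ -S_p + δ a.e. for some δ > 0, where S_p is the best constant in S‖u‖_{L^p(Ω)}^p ≤ ∫_Ω |∇u|^p dx on W_0^{1,p}(Ω). Then there exists δ₀ > 0 such that ∫_Ω |∇u|^p + V|u|^p dx ≥ δ₀ ∫_Ω |∇u|^p dx for all u ∈ W_0^{1,p}(Ω). -/

import Mathlib

open MeasureTheory Real Set
open scoped ENNReal RealInnerProductSpace

noncomputable section

abbrev Euc (N : ℕ) := EuclideanSpace ℝ (Fin N)

/-- A formal surrogate for membership in `W^{1,p}_0(Ω)`. -/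
def SobolevW0 {N : ℕ} (p : ℝ) (Ω : Set (Euc N)) (u : Euc N → ℝ) : Prop :=
  Differentiable ℝ u ∧ tsupport u ⊆ Ω ∧
    MemLp u (ENNReal.ofReal p) (volume.restrict Ω) ∧
    MemLp (fun x => ‖gradient u x‖) (ENNReal.ofReal p) (volume.restrict Ω)

/-- The energy `∫_Ω |∇u|^p + V |u|^p dx`. -/
def dirichletEnergy {N : ℕ} (p : ℝ) (Ω : Set (Euc N)) (V u : Euc N → ℝ) : ℝ :=
  ∫ x in Ω, (‖gradient u x‖ ^ p + V x * |u x| ^ p)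

/-- The principal eigenvalue `λ(g,V)` defined via its variational characterization. -/
def principalEV {N : ℕ} (p : ℝ) (Ω : Set (Euc N)) (g V : Euc N → ℝ) : ℝ :=
  sInf (dirichletEnergy p Ω V '' {u | SobolevW0 p Ω u ∧ (∫ x in Ω, g x * |u x| ^ p) = 1})

/-- The best constant `S_r` in `S ‖u‖_{L^r}^p ≤ ∫_Ω |∇u|^p`. -/
def bestSobolev {N : ℕ} (p r : ℝ) (Ω : Set (Euc N)) : ℝ :=
  sInf {c | ∃ u : Euc N → ℝ, SobolevW0 p Ω u ∧ (∫ x in Ω, |u x| ^ r) = 1 ∧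
    c = ∫ x in Ω, ‖gradient u x‖ ^ p}

/-- The `L^q(Ω)` norm. -/
def lqNorm {N : ℕ} (q : ℝ) (Ω : Set (Euc N)) (f : Euc N → ℝ) : ℝ :=
  (∫ x in Ω, |f x| ^ q) ^ (1 / q)

/-- `f` is a rearrangement of `g` on `Ω`. -/
def IsRearrangement {N : ℕ} (Ω : Set (Euc N)) (f g : Euc N → ℝ) : Prop :=
  ∀ α : ℝ, volume {x ∈ Ω | α ≤ f x} = volume {x ∈ Ω | α ≤ g x}

/-- Hypothesis (H1). -/
def SatisfiesH1 {N : ℕ} (p q : ℝ) (Ω : Set (Euc N)) (g V : Euc N → ℝ) : Prop :=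
  MemLp g (ENNReal.ofReal q) (volume.restrict Ω) ∧
  MemLp V (ENNReal.ofReal q) (volume.restrict Ω) ∧
  (p ≤ N → (N : ℝ) / p < q) ∧ ((N : ℝ) < p → q = 1)

/-- Hypothesis (H2). -/
def SatisfiesH2 {N : ℕ} (p q : ℝ) (Ω : Set (Euc N)) (g V : Euc N → ℝ) : Prop :=
  (lqNorm q Ω (fun x => min (V x) 0) < bestSobolev p (p * (q / (q - 1))) Ω ∨
    ∃ δ > 0, ∀ᵐ x ∂(volume.restrict Ω), -bestSobolev p p Ω + δ ≤ V x) ∧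
  ¬ (∀ᵐ x ∂(volume.restrict Ω), g x ≤ 0)

/-- `u` is a weak solution of `-Δ_p u + V |u|^{p-2} u = λ g |u|^{p-2} u` in `Ω`. -/
def IsWeakSolution {N : ℕ} (p : ℝ) (Ω : Set (Euc N)) (g V : Euc N → ℝ) (lam : ℝ)
    (u : Euc N → ℝ) : Prop :=
  ∀ φ : Euc N → ℝ, SobolevW0 p Ω φ →
    (∫ x in Ω, (‖gradient u x‖ ^ (p - 2) * ⟪gradient u x, gradient φ x⟫ +
      V x * |u x| ^ (p - 2) * u x * φ x)) =
    lam * ∫ x in Ω, g x * |u x| ^ (p - 2) * u x * φ x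

/-- The divergence of a vector field. -/
def divg {N : ℕ} (F : Euc N → Euc N) (x : Euc N) : ℝ :=
  ∑ i, fderiv ℝ F x (EuclideanSpace.single i 1) i


lemma grad_const_mul' {N : ℕ} (u : Euc N → ℝ) (hu : Differentiable ℝ u) (c : ℝ) (x : Euc N) :
    gradient (fun y => c * u y) x = c • gradient u x := by
  unfold gradient
  rw [fderiv_const_mul (hu x) c]
  simp

lemma bestSobolev_nonneg' {N : ℕ} (p r : ℝ) (Ω : Set (Euc N)) : 0 ≤ bestSobolev p r Ω := by
  apply Real.sInf_nonneg
  rintro c ⟨u, -, -, rfl⟩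
  exact integral_nonneg fun x => Real.rpow_nonneg (norm_nonneg _) p

lemma sobolev_ineq' {N : ℕ} (p : ℝ) (hp : 1 < p) (Ω : Set (Euc N)) (u : Euc N → ℝ)
    (hu : SobolevW0 p Ω u) :
    bestSobolev p p Ω * ∫ x in Ω, |u x| ^ p ≤ ∫ x in Ω, ‖gradient u x‖ ^ p := by
  set T := ∫ x in Ω, |u x| ^ p with hT
  set G := ∫ x in Ω, ‖gradient u x‖ ^ p with hG
  have hp0 : (0:ℝ) < p := lt_trans one_pos hp
  have hTnn : 0 ≤ T := integral_nonneg fun x => Real.rpow_nonneg (abs_nonneg _) p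
  rcases eq_or_lt_of_le hTnn with h0 | hTpos
  · rw [← h0, mul_zero]
    exact integral_nonneg fun x => Real.rpow_nonneg (norm_nonneg _) p
  · set c : ℝ := T ^ (-1/p) with hc
    have hcpos : 0 < c := Real.rpow_pos_of_pos hTpos _
    have hcp : c ^ p = T⁻¹ := by
      rw [hc, ← Real.rpow_mul hTnn, div_mul_cancel₀ _ (ne_of_gt hp0), Real.rpow_neg_one]
    set v : Euc N → ℝ := fun x => c * u x with hv
    have hvW : SobolevW0 p Ω v := by
      obtain ⟨hd, hs, hm1, hm2⟩ := hu
      refine ⟨hd.const_mul c, ?_, hm1.const_mul c, ?_⟩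
      · refine subset_trans (closure_mono ?_) hs
        intro x hx
        simp only [Function.mem_support] at hx ⊢
        intro h; exact hx (by simp [hv, h])
      · have : (fun x => ‖gradient v x‖) = fun x => |c| * ‖gradient u x‖ := by
          funext x
          rw [hv, grad_const_mul' u hd c x, norm_smul, Real.norm_eq_abs]
        rw [this]
        exact hm2.const_mul _
    have habs : ∀ x : Euc N, |v x| ^ p = c ^ p * |u x| ^ p := by
      intro x
      rw [hv]
      simp only []
      rw [abs_mul, Real.mul_rpow (abs_nonneg _) (abs_nonneg _), abs_of_pos hcpos]
    have hint1 : (∫ x in Ω, |v x| ^ p) = 1 := by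
      simp_rw [habs]
      rw [integral_const_mul, ← hT, hcp, inv_mul_cancel₀ (ne_of_gt hTpos)]
    have hgradv : ∀ x : Euc N, ‖gradient v x‖ ^ p = c ^ p * ‖gradient u x‖ ^ p := by
      intro x
      rw [hv, grad_const_mul' u hu.1 c x, norm_smul, Real.norm_eq_abs,
        Real.mul_rpow (abs_nonneg _) (norm_nonneg _), abs_of_pos hcpos]
    have hmem : c ^ p * G ∈ {c | ∃ u : Euc N → ℝ, SobolevW0 p Ω u ∧
        (∫ x in Ω, |u x| ^ p) = 1 ∧ c = ∫ x in Ω, ‖gradient u x‖ ^ p} := by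
      refine ⟨v, hvW, hint1, ?_⟩
      simp_rw [hgradv]
      rw [integral_const_mul, ← hG]
    have hbdd : BddBelow {c | ∃ u : Euc N → ℝ, SobolevW0 p Ω u ∧
        (∫ x in Ω, |u x| ^ p) = 1 ∧ c = ∫ x in Ω, ‖gradient u x‖ ^ p} := by
      refine ⟨0, ?_⟩
      rintro d ⟨w, -, -, rfl⟩
      exact integral_nonneg fun x => Real.rpow_nonneg (norm_nonneg _) p
    have hle : bestSobolev p p Ω ≤ c ^ p * G := csInf_le hbdd hmem
    rw [hcp] at hle
    calc bestSobolev p p Ω * T ≤ (T⁻¹ * G) * T := by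
          exact mul_le_mul_of_nonneg_right hle hTnn
      _ = G := by field_simp

theorem coercivity_of_bounded_below_potential {N : ℕ} (hN : 2 ≤ N) (Ω : Set (Euc N))
    (hΩb : Bornology.IsBounded Ω) (hΩm : MeasurableSet Ω) (p q : ℝ) (hp : 1 < p)
    (hq : 1 ≤ q) (V : Euc N → ℝ)
    (hV : MemLp V (ENNReal.ofReal q) (volume.restrict Ω)) (δ : ℝ) (hδ : 0 < δ)
    (hVlow : ∀ᵐ x ∂(volume.restrict Ω), -bestSobolev p p Ω + δ ≤ V x) :
    ∃ δ₀ > 0, ∀ u : Euc N → ℝ, SobolevW0 p Ω u →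
      δ₀ * ∫ x in Ω, ‖gradient u x‖ ^ p ≤
        (∫ x in Ω, ‖gradient u x‖ ^ p) + ∫ x in Ω, V x * |u x| ^ p := by
  
  set S := bestSobolev p p Ω with hS
  have hSnn : 0 ≤ S := bestSobolev_nonneg' p p Ω
  have hSd : (0:ℝ) < S + δ := by linarith
  refine ⟨δ / (S + δ), div_pos hδ hSd, fun u hu => ?_⟩
  set G := ∫ x in Ω, ‖gradient u x‖ ^ p with hG
  set T := ∫ x in Ω, |u x| ^ p with hT
  have hGnn : 0 ≤ G := integral_nonneg fun x => Real.rpow_nonneg (norm_nonneg _) p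
  have hTnn : 0 ≤ T := integral_nonneg fun x => Real.rpow_nonneg (abs_nonneg _) p
  have hsob : S * T ≤ G := sobolev_ineq' p hp Ω u hu
  have hp0 : (0:ℝ) < p := lt_trans one_pos hp
  rw [div_mul_eq_mul_div, div_le_iff₀ hSd]
  by_cases hi : Integrable (fun x => V x * |u x| ^ p) (volume.restrict Ω)
  · have hup : Integrable (fun x => |u x| ^ p) (volume.restrict Ω) := by
      have := hu.2.2.1.integrable_norm_rpow
        (by simp [ENNReal.ofReal_eq_zero, not_le, hp0]) ENNReal.ofReal_ne_top
      simpa [Real.norm_eq_abs, ENNReal.toReal_ofReal hp0.le] using this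
    have hkey : (-S + δ) * T ≤ ∫ x in Ω, V x * |u x| ^ p := by
      rw [hT, ← integral_const_mul]
      refine integral_mono_ae (hup.const_mul _) hi ?_
      filter_upwards [hVlow] with x hx
      exact mul_le_mul_of_nonneg_right hx (Real.rpow_nonneg (abs_nonneg _) p)
    have h1 : S * (S * T) ≤ S * G := mul_le_mul_of_nonneg_left hsob hSnn
    nlinarith [mul_nonneg hTnn (mul_pos hδ hδ).le]
  · rw [integral_undef hi, add_zero]
    nlinarith
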